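/- Let F be a field and f : Σ* → F a word function recognized by a weighted automaton of size r over F. Then the Hankel matrix H(f), the infinite matrix indexed by pairs of words (u,v) with entry H(f)_{u,v} = f(u ∘ v), has rank at most r: every finite submatrix of H(f) has rank at most r. -/
import Mathlib


open Matrix

def wordProd {S : Type*} [CommSemiring S] {A : Type*} {r : ℕ}
    (μ : A → Matrix (Fin r) (Fin r) S) (w : List A) : Matrix (Fin r) (Fin r) S :=
  (w.map μ).prod

/-- If `f` is recognized by a weighted automaton of size `r` over a field, then its
Hankel matrix has rank at most `r`: any `r+1` rows are linearly dependent. -/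
theorem hankel_rank_le_of_recognizable {F A : Type*} [Field F] [Fintype A] {r : ℕ}
    (α γ : Fin r → F) (μ : A → Matrix (Fin r) (Fin r) F) (f : List A → F)
    (hf : ∀ w : List A, f w = α ⬝ᵥ (wordProd μ w *ᵥ γ)) :
    ∀ u : Fin (r + 1) → List A,
      ¬ LinearIndependent F (fun i : Fin (r + 1) => (fun v : List A => f (u i ++ v))) := by
  intro u hli
  let L : (Fin r → F) →ₗ[F] (List A → F) :=
    { toFun := fun x => fun v => x ⬝ᵥ (wordProd μ v *ᵥ γ)
      map_add' := by intro x y; funext v; simp [add_dotProduct]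
      map_smul' := by intro c x; funext v; simp [smul_dotProduct] }
  have key : (fun i : Fin (r + 1) => (fun v : List A => f (u i ++ v)))
      = L ∘ (fun i => α ᵥ* wordProd μ (u i)) := by
    funext i v
    have hprod : wordProd μ (u i ++ v) = wordProd μ (u i) * wordProd μ v := by
      simp [wordProd, List.map_append]
    simp only [Function.comp, L, LinearMap.coe_mk, AddHom.coe_mk]
    rw [hf, hprod, ← Matrix.mulVec_mulVec, Matrix.dotProduct_mulVec]
  rw [key] at hli
  have h2 : LinearIndependent F (fun i : Fin (r + 1) => α ᵥ* wordProd μ (u i)) :=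
    LinearIndependent.of_comp L hli
  have := h2.fintype_card_le_finrank
  simp [Module.finrank_fintype_fun_eq_card] at this
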